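/- If J(x) > J(xy) and 1 − ∑_{i∈xy} w_i ≥ 0, then J(xy) ≥ (1 − ∑_{i∈xy} w_i)/ρ(y), where ρ(y) = (∑_{i∈y} w_i)/(∑_{i∈y} c_i). -/

import Mathlib

/-- Numerator of the cost/reward ratio: `∑_i c_{s_i} (1 - ∑_{j<i} w_{s_j})`,
computed with an accumulator `W` for the weight of the elements already listed. -/
def searchNum {α : Type*} (w c : α → ℝ) : ℝ → List α → ℝ
  | _, [] => 0
  | W, a :: t => c a * (1 - W) + searchNum w c (W + w a) t

/-- The cost/reward ratio `J(s)`, with value `+∞` when the total weight of `s`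
vanishes (in particular `J(∅) = +∞`). -/
noncomputable def Jval {α : Type*} (w c : α → ℝ) (s : List α) : EReal :=
  if (s.map w).sum = 0 then ⊤ else ((searchNum w c 0 s / (s.map w).sum : ℝ) : EReal)

/-- Density of (the support of) a sequence. -/
noncomputable def densityL {α : Type*} (w c : α → ℝ) (s : List α) : ℝ :=
  (s.map w).sum / (s.map c).sum

lemma searchNum_append {α : Type*} (w c : α → ℝ) (x y : List α) (W : ℝ) :
    searchNum w c W (x ++ y) = searchNum w c W x + searchNum w c (W + (x.map w).sum) y := by
  induction x generalizing W with
  | nil => simp [searchNum]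
  | cons a t ih =>
      simp only [List.cons_append, searchNum, List.map_cons, List.sum_cons]
      rw [ih]
      ring

lemma searchNum_ge {α : Type*} (w c : α → ℝ) (s : List α) (W : ℝ)
    (hc : ∀ i ∈ s, 0 ≤ c i) (hw : ∀ i ∈ s, 0 ≤ w i) :
    (s.map c).sum * (1 - W - (s.map w).sum) ≤ searchNum w c W s := by
  induction s generalizing W with
  | nil => simp [searchNum]
  | cons a t ih =>
      simp only [searchNum, List.map_cons, List.sum_cons]
      have h1 : (t.map c).sum * (1 - (W + w a) - (t.map w).sum) ≤ searchNum w c (W + w a) t :=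
        ih (W + w a) (fun i hi => hc i (List.mem_cons_of_mem _ hi))
          (fun i hi => hw i (List.mem_cons_of_mem _ hi))
      have hca : 0 ≤ c a := hc a List.mem_cons_self
      have hwa : 0 ≤ w a := hw a List.mem_cons_self
      have hwt : 0 ≤ (t.map w).sum := List.sum_nonneg (by
        intro z hz
        obtain ⟨i, hi, rfl⟩ := List.mem_map.1 hz
        exact hw i (List.mem_cons_of_mem _ hi))
      nlinarith

/-- If `J(x) > J(xy)` and `1 − ∑_{i∈xy} w_i ≥ 0`, then
`J(xy) ≥ (1 − ∑_{i∈xy} w_i)/ρ(y)`. -/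
theorem stmt_6 (n : ℕ) (w c : Fin n → ℝ)
    (hw : ∀ i, 0 ≤ w i) (hc : ∀ i, 0 < c i)
    (x y : List (Fin n)) (hnodup : (x ++ y).Nodup)
    (hwy : 0 < (y.map w).sum)
    (hJ : Jval w c (x ++ y) < Jval w c x)
    (hsimplex : 0 ≤ 1 - ((x ++ y).map w).sum) :
    (((1 - ((x ++ y).map w).sum) / densityL w c y : ℝ) : EReal) ≤ Jval w c (x ++ y) := by
  set Wx := (x.map w).sum with hWx
  set Wy := (y.map w).sum with hWy
  have hS : ((x ++ y).map w).sum = Wx + Wy := by simp [hWx, hWy]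
  have hWxnn : 0 ≤ Wx := List.sum_nonneg (by
    intro z hz; obtain ⟨i, _, rfl⟩ := List.mem_map.1 hz; exact hw i)
  have hSpos : 0 < Wx + Wy := by linarith
  have hyne : y ≠ [] := by
    rintro rfl; rw [hWy] at hwy; simp at hwy
  have hCy : 0 < (y.map c).sum := by
    apply List.sum_pos
    · intro z hz; obtain ⟨i, _, rfl⟩ := List.mem_map.1 hz; exact hc i
    · simpa using hyne
  have hQ : (y.map c).sum * (1 - Wx - Wy) ≤ searchNum w c Wx y :=
    searchNum_ge w c y Wx (fun i _ => (hc i).le) (fun i _ => hw i)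
  have hNxy : searchNum w c 0 (x ++ y) = searchNum w c 0 x + searchNum w c Wx y := by
    rw [searchNum_append]; norm_num; rfl
  have hJxy : Jval w c (x ++ y) =
      ((searchNum w c 0 (x ++ y) / (Wx + Wy) : ℝ) : EReal) := by
    rw [Jval, hS, if_neg (by positivity)]
  rw [hJxy, EReal.coe_le_coe_iff, hS, densityL, div_div_eq_mul_div,
    div_le_div_iff₀ hwy hSpos]
  rcases eq_or_lt_of_le hWxnn with h0 | hWxpos
  · -- Wx = 0
    have hNx : 0 ≤ searchNum w c 0 x := by
      have h2 := searchNum_ge w c x 0 (fun i _ => (hc i).le) (fun i _ => hw i)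
      have hCx : 0 ≤ (x.map c).sum := List.sum_nonneg (by
        intro z hz; obtain ⟨i, _, rfl⟩ := List.mem_map.1 hz; exact (hc i).le)
      nlinarith [h2, hCx, h0]
    rw [hS] at hsimplex
    rw [← h0] at hsimplex hQ hNxy ⊢
    nlinarith [mul_le_mul_of_nonneg_right hQ hwy.le, mul_nonneg hNx hwy.le]
  · -- Wx > 0
    have hJx : Jval w c x = ((searchNum w c 0 x / Wx : ℝ) : EReal) := by
      rw [Jval, if_neg (by positivity)]
    rw [hJxy, hJx, EReal.coe_lt_coe_iff, div_lt_div_iff₀ hSpos hWxpos] at hJ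
    rw [hS] at hsimplex
    nlinarith [hQ, hNxy, hCy]
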